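/- Every digraph D with at most two lonely arcs is BE-diperfect. In particular every symmetric digraph (no lonely arcs) is BE-diperfect, and hence α-diperfect. -/

import Mathlib

open Relation

variable {V : Type*}

/-- `u` and `v` are adjacent in the digraph with arc relation `A`. -/
def DAdj (A : V → V → Prop) (u v : V) : Prop := A u v ∨ A v u

/-- `v` is a source: no arc enters `v`. -/
def IsSource (A : V → V → Prop) (v : V) : Prop := ∀ u, ¬ A u v

/-- `v` is a sink: no arc leaves `v`. -/
def IsSink (A : V → V → Prop) (v : V) : Prop := ∀ u, ¬ A v u

/-- A stable (independent) set of the digraph. -/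
def IsStable (A : V → V → Prop) (S : Set V) : Prop :=
  ∀ u ∈ S, ∀ v ∈ S, u ≠ v → ¬ DAdj A u v

/-- The stability number. -/
noncomputable def alphaNum (A : V → V → Prop) : ℕ :=
  sSup {n | ∃ S : Set V, IsStable A S ∧ S.ncard = n}

/-- A maximum stable set. -/
def IsMaxStable (A : V → V → Prop) (S : Set V) : Prop :=
  IsStable A S ∧ ∀ T : Set V, IsStable A T → T.ncard ≤ S.ncard

/-- A (nonempty) directed path, given as its list of vertices. -/
def IsDiPath (A : V → V → Prop) (l : List V) : Prop :=
  l ≠ [] ∧ l.Nodup ∧ l.Chain' A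

/-- A path partition of the digraph: every vertex lies on exactly one of the paths. -/
def IsPathPartition (A : V → V → Prop) (P : Set (List V)) : Prop :=
  (∀ l ∈ P, IsDiPath A l) ∧ ∀ v : V, ∃! l, l ∈ P ∧ v ∈ l

/-- An `S`-path partition: each path contains exactly one vertex of `S`. -/
def IsSPartition (A : V → V → Prop) (S : Set V) (P : Set (List V)) : Prop :=
  IsPathPartition A P ∧ ∀ l ∈ P, ∃! s, s ∈ l ∧ s ∈ S

/-- An `S`-BE-path partition: each path contains exactly one vertex of `S`,
which is moreover an endpoint of the path. -/
def IsBEPartition (A : V → V → Prop) (S : Set V) (P : Set (List V)) : Prop :=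
  IsSPartition A S P ∧
    ∀ l ∈ P, ∀ s ∈ l, s ∈ S → l.head? = some s ∨ l.getLast? = some s

/-- The α-property: every maximum stable set admits an `S`-path partition. -/
def AlphaProperty (A : V → V → Prop) : Prop :=
  ∀ S : Set V, IsMaxStable A S → ∃ P, IsSPartition A S P

/-- The BE-property: every maximum stable set admits an `S`-BE-path partition. -/
def BEProperty (A : V → V → Prop) : Prop :=
  ∀ S : Set V, IsMaxStable A S → ∃ P, IsBEPartition A S P

/-- α-diperfect: every induced subdigraph satisfies the α-property. -/
def AlphaDiperfect (A : V → V → Prop) : Prop :=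
  ∀ W : Set V, AlphaProperty (fun a b : W => A a.1 b.1)

/-- BE-diperfect: every induced subdigraph satisfies the BE-property. -/
def BEDiperfect (A : V → V → Prop) : Prop :=
  ∀ W : Set V, BEProperty (fun a b : W => A a.1 b.1)

/-- Mutual reachability. -/
def MutReach (A : V → V → Prop) (u v : V) : Prop :=
  ReflTransGen A u v ∧ ReflTransGen A v u

/-- Semicomplete digraph: any two distinct vertices are adjacent. -/
def Semicomplete (A : V → V → Prop) : Prop :=
  ∀ u v : V, u ≠ v → DAdj A u v

/-- Strongly connected digraph. -/
def Strong (A : V → V → Prop) : Prop :=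
  ∀ u v : V, ReflTransGen A u v

/-- The digraph has an induced transitive triangle. -/
def HasInducedTransitiveTriangle (A : V → V → Prop) : Prop :=
  ∃ a b c : V, a ≠ b ∧ a ≠ c ∧ b ≠ c ∧
    A a b ∧ A a c ∧ A c b ∧ ¬ A b a ∧ ¬ A c a ∧ ¬ A b c

/-- The digraph is a blocking odd cycle: its underlying graph is an odd cycle
`x_1 x_2 ⋯ x_{2k+1} x_1` (with `k ≥ 1`; here `x i` is `x_{i+1}`), and both `x_1`
and `x_2` are each a source or a sink. -/
def IsBlockingOddCycle (A : V → V → Prop) : Prop :=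
  ∃ (k : ℕ) (x : ZMod (2 * k + 1) → V), 1 ≤ k ∧ Function.Bijective x ∧
    (∀ i j, DAdj A (x i) (x j) ↔ (j = i + 1 ∨ i = j + 1)) ∧
    (IsSource A (x 0) ∨ IsSink A (x 0)) ∧
    (IsSource A (x 1) ∨ IsSink A (x 1))

/-- The digraph is an anti-directed odd cycle: its underlying graph is an odd cycle
`x_1 ⋯ x_{2k+1} x_1` with `k ≥ 2` (here `x m` is `x_{m+1}`), and each of
`x_1, x_2, x_3, x_4, x_6, x_8, …, x_{2k}` is a source or a sink. -/
def IsAntiDirectedOddCycle (A : V → V → Prop) : Prop :=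
  ∃ (k : ℕ) (x : ZMod (2 * k + 1) → V), 2 ≤ k ∧ Function.Bijective x ∧
    (∀ i j, DAdj A (x i) (x j) ↔ (j = i + 1 ∨ i = j + 1)) ∧
    ∀ m : ℕ, m ≤ 2 * k →
      (m ≤ 3 ∨ (5 ≤ m ∧ m ≤ 2 * k - 1 ∧ Odd m)) →
      (IsSource A (x (m : ZMod (2 * k + 1))) ∨ IsSink A (x (m : ZMod (2 * k + 1))))

/-- `v` is a universal vertex. -/
def IsUniversal (A : V → V → Prop) (v : V) : Prop := ∀ u, u ≠ v → DAdj A u v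

/-- The underlying simple graph of a digraph. -/
def underlyingGraph (A : V → V → Prop) : SimpleGraph V where
  Adj u v := u ≠ v ∧ DAdj A u v
  symm := ⟨fun _ _ h => ⟨h.1.symm, h.2.symm⟩⟩
  loopless := ⟨fun _ h => h.1 rfl⟩

/-- The underlying graph of the digraph is a cycle. -/
def UnderlyingIsCycle (A : V → V → Prop) : Prop :=
  ∃ (n : ℕ) (x : ZMod n → V), 3 ≤ n ∧ Function.Bijective x ∧
    ∀ i j, DAdj A (x i) (x j) ↔ (j = i + 1 ∨ i = j + 1)

/-- A perfect graph: every induced subgraph has chromatic number equal to its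
clique number. -/
def GraphPerfect (G : SimpleGraph V) : Prop :=
  ∀ W : Set V, (G.induce W).chromaticNumber = ((G.induce W).cliqueNum : ℕ∞)

/-- A Hamilton directed path whose endpoints are `{s, t}` (in some order). -/
def HamiltonPathBetween (A : V → V → Prop) (s t : V) : Prop :=
  ∃ l : List V, IsDiPath A l ∧ (∀ v : V, v ∈ l) ∧
    ((l.head? = some s ∧ l.getLast? = some t) ∨
      (l.head? = some t ∧ l.getLast? = some s))

/-- A Hamilton directed path starting at `s` and ending at `t`. -/
def HamiltonPathFromTo (A : V → V → Prop) (s t : V) : Prop :=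
  ∃ l : List V, IsDiPath A l ∧ (∀ v : V, v ∈ l) ∧
    l.head? = some s ∧ l.getLast? = some t

/-- The exceptional strong semicomplete digraph on four vertices
(`a,b,c,d = 0,1,2,3`): the 4-cycle `a→d→c→b→a` together with digons `a↔c`, `b↔d`. -/
def BadFour : Fin 4 → Fin 4 → Prop := fun u v =>
  (u, v) ∈ ({(0,3), (3,2), (2,1), (1,0), (0,2), (2,0), (1,3), (3,1)} :
    Set (Fin 4 × Fin 4))

/-- A locally in-semicomplete digraph: any two in-neighbours of a vertex are adjacent. -/
def LocallyInSemicomplete (A : V → V → Prop) : Prop :=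
  ∀ v u w : V, A u v → A w v → u ≠ w → DAdj A u w

/-- A strong component: a maximal set of pairwise mutually reachable vertices. -/
def IsStrongComponent (A : V → V → Prop) (X : Set V) : Prop :=
  X.Nonempty ∧ (∀ u ∈ X, ∀ v ∈ X, MutReach A u v) ∧
    ∀ u v, v ∈ X → MutReach A u v → u ∈ X

/-- `C` is the vertex set of an induced cycle of `G`. -/
def InducedCycleSet (G : SimpleGraph V) (C : Set V) : Prop :=
  ∃ (n : ℕ) (x : ZMod n → V), 3 ≤ n ∧ Function.Injective x ∧ Set.range x = C ∧
    ∀ i j, G.Adj (x i) (x j) ↔ (j = i + 1 ∨ i = j + 1)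

/-- `G` contains a subdivision of `K₄`: four branch vertices joined by
pairwise internally disjoint paths. -/
def HasK4Subdivision (G : SimpleGraph V) : Prop :=
  ∃ (b : Fin 4 → V) (P : ∀ i j : Fin 4, G.Walk (b i) (b j)),
    Function.Injective b ∧
    (∀ i j, i ≠ j → (P i j).IsPath) ∧
    (∀ i j m, i ≠ j → b m ∈ (P i j).support → m = i ∨ m = j) ∧
    (∀ i j k l, i ≠ j → k ≠ l → ({i, j} : Finset (Fin 4)) ≠ {k, l} →
      ∀ v, v ∈ (P i j).support → v ∈ (P k l).support →
        (v = b i ∨ v = b j) ∧ (v = b k ∨ v = b l))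

/-- 2-connected: connected, at least 3 vertices, and no cut vertex. -/
def TwoConnected (G : SimpleGraph V) : Prop :=
  G.Connected ∧ 3 ≤ Nat.card V ∧
    ∀ v : V, (G.induce {u | u ≠ v}).Preconnected


namespace BE2
variable {V : Type*}

/-- A partition of the finset `s` into nonempty `R`-paths (no global nodup yet beyond flatten). -/
def PartOn (R : V → V → Prop) (s : Finset V) (P : List (List V)) : Prop :=
  (∀ l ∈ P, l ≠ [] ∧ l.Chain' R) ∧ P.flatten.Nodup ∧ ∀ v, v ∈ P.flatten ↔ v ∈ s

/-- terminal vertices -/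
def ters (P : List (List V)) : List V := P.filterMap List.getLast?

/-- head vertices -/
def heds (P : List (List V)) : List V := P.filterMap List.head?

theorem mem_of_getLast? {l : List V} {a : V} (h : l.getLast? = some a) : a ∈ l := by
  have hne : l ≠ [] := by rintro rfl; simp at h
  rw [List.getLast?_eq_getLast hne] at h
  exact (Option.some_inj.mp h) ▸ List.getLast_mem hne

theorem mem_of_head? {l : List V} {a : V} (h : l.head? = some a) : a ∈ l := by
  have hne : l ≠ [] := by rintro rfl; simp at h
  rw [List.head?_eq_head hne] at h
  exact (Option.some_inj.mp h) ▸ List.head_mem hne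

theorem ters_mem {P : List (List V)} {t : V} : t ∈ ters P ↔ ∃ l ∈ P, l.getLast? = some t :=
  List.mem_filterMap

theorem heds_mem {P : List (List V)} {t : V} : t ∈ heds P ↔ ∃ l ∈ P, l.head? = some t :=
  List.mem_filterMap

theorem ters_length {P : List (List V)} (h : ∀ l ∈ P, l ≠ []) : (ters P).length = P.length := by
  induction P with
  | nil => rfl
  | cons a P ih =>
    have ha : a ≠ [] := h a (by simp)
    have := List.getLast?_eq_getLast ha
    simp [ters, List.filterMap_cons, this]
    simpa [ters] using ih (fun l hl => h l (by simp [hl]))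

theorem heds_length {P : List (List V)} (h : ∀ l ∈ P, l ≠ []) : (heds P).length = P.length := by
  induction P with
  | nil => rfl
  | cons a P ih =>
    have ha : a ≠ [] := h a (by simp)
    have := List.head?_eq_head ha
    simp [heds, List.filterMap_cons, this]
    simpa [heds] using ih (fun l hl => h l (by simp [hl]))

theorem ters_nodup {P : List (List V)} (hne : ∀ l ∈ P, l ≠ []) (h : P.flatten.Nodup) :
    (ters P).Nodup := by
  induction P with
  | nil => simp [ters]
  | cons a P ih =>
    have ha : a ≠ [] := hne a (by simp)
    have hlast := List.getLast?_eq_getLast ha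
    rw [List.flatten_cons] at h
    have hdisj := List.disjoint_of_nodup_append h
    have hrest : P.flatten.Nodup := h.of_append_right
    rw [ters, List.filterMap_cons, hlast]
    refine List.nodup_cons.2 ⟨?_, ih (fun l hl => hne l (by simp [hl])) hrest⟩
    intro hmem
    obtain ⟨l, hlP, hl⟩ := ters_mem.1 hmem
    exact hdisj (List.getLast_mem ha) (List.mem_flatten.2 ⟨l, hlP, mem_of_getLast? hl⟩)

theorem heds_nodup {P : List (List V)} (hne : ∀ l ∈ P, l ≠ []) (h : P.flatten.Nodup) :
    (heds P).Nodup := by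
  induction P with
  | nil => simp [heds]
  | cons a P ih =>
    have ha : a ≠ [] := hne a (by simp)
    have hlast := List.head?_eq_head ha
    rw [List.flatten_cons] at h
    have hdisj := List.disjoint_of_nodup_append h
    have hrest : P.flatten.Nodup := h.of_append_right
    rw [heds, List.filterMap_cons, hlast]
    refine List.nodup_cons.2 ⟨?_, ih (fun l hl => hne l (by simp [hl])) hrest⟩
    intro hmem
    obtain ⟨l, hlP, hl⟩ := heds_mem.1 hmem
    exact hdisj (List.head_mem ha) (List.mem_flatten.2 ⟨l, hlP, mem_of_head? hl⟩)

theorem unique_path {P : List (List V)} (h : P.flatten.Nodup) {l₁ l₂ : List V}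
    (h₁ : l₁ ∈ P) (h₂ : l₂ ∈ P) {x : V} (hx₁ : x ∈ l₁) (hx₂ : x ∈ l₂) : l₁ = l₂ := by
  by_contra hne'
  have hp := (List.nodup_flatten.1 h).2
  haveI : Std.Symm (@List.Disjoint V) := ⟨fun a b hd => hd.symm⟩
  have := hp.forall h₁ h₂ hne'
  exact this hx₁ hx₂

theorem partOn_perm {R : V → V → Prop} {s : Finset V} {P Q : List (List V)}
    (hpq : P.Perm Q) (h : PartOn R s P) : PartOn R s Q := by
  obtain ⟨h1, h2, h3⟩ := h
  have hJ : P.flatten.Perm Q.flatten := hpq.flatten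
  exact ⟨fun l hl => h1 l (hpq.mem_iff.2 hl), hJ.nodup h2,
    fun v => (hJ.mem_iff.symm).trans (h3 v)⟩

theorem tersF_perm [DecidableEq V] {P Q : List (List V)} (hpq : P.Perm Q) :
    (ters P).toFinset = (ters Q).toFinset := by
  ext x
  simp only [List.mem_toFinset]
  exact (hpq.filterMap List.getLast?).mem_iff

end BE2

namespace BE2
variable {V : Type*}

/-- Extend a partition of `s.erase t₁` to one of `s` by appending `t₁` to a path ending at an
in-neighbour `τ` of `t₁`. -/
theorem extend_lemma {R : V → V → Prop} {s : Finset V} {t₁ : V} {Q' : List (List V)}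
    [DecidableEq V]
    (hQ' : PartOn R (s.erase t₁) Q') (ht₁s : t₁ ∈ s) {τ : V} (hτ : τ ∈ ters Q')
    (harc : R τ t₁) :
    ∃ Q, PartOn R s Q ∧ (ters Q).toFinset = insert t₁ (((ters Q').toFinset).erase τ) := by
  classical
  obtain ⟨U, hUQ, hUl⟩ := ters_mem.1 hτ
  obtain ⟨Q₁, Q₂', rfl⟩ := List.append_of_mem hUQ
  set Q₂ := Q₁ ++ Q₂' with hQ₂
  have hpq : (Q₁ ++ U :: Q₂').Perm (U :: Q₂) := List.perm_middle
  have hQC : PartOn R (s.erase t₁) (U :: Q₂) := partOn_perm hpq hQ'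
  obtain ⟨hqpaths, hqnd, hqcov⟩ := hQC
  have hj : ((U ++ [t₁]) :: Q₂).flatten.Perm (t₁ :: (U :: Q₂).flatten) := by
    have e1 : (U ++ [t₁]) ++ Q₂.flatten = U ++ (t₁ :: Q₂.flatten) := by simp
    simp only [List.flatten_cons]
    rw [e1]
    exact List.perm_middle
  have ht₁nf : t₁ ∉ (U :: Q₂).flatten := by
    intro hmem
    exact absurd (Finset.mem_erase.1 ((hqcov t₁).1 hmem)).1 (by simp)
  refine ⟨(U ++ [t₁]) :: Q₂, ⟨?_, ?_, ?_⟩, ?_⟩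
  · intro l hl
    rcases List.mem_cons.1 hl with rfl | hl
    · refine ⟨by simp, List.isChain_append.2 ⟨(hqpaths U (by simp)).2,
        List.isChain_singleton t₁, ?_⟩⟩
      intro x hx y hy
      rw [Option.mem_def, hUl] at hx
      simp only [List.head?_cons, Option.mem_def, Option.some_inj] at hy
      obtain rfl := Option.some_inj.mp hx
      subst hy
      exact harc
    · exact hqpaths l (by simp [hl])
  · exact hj.symm.nodup (List.nodup_cons.2 ⟨ht₁nf, hqnd⟩)
  · intro v
    constructor
    · intro hv
      rcases List.mem_cons.1 (hj.mem_iff.1 hv) with rfl | hv'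
      · exact ht₁s
      · exact Finset.mem_of_mem_erase ((hqcov v).1 hv')
    · intro hv
      by_cases hvt : v = t₁
      · exact hj.mem_iff.2 (by simp [hvt])
      · exact hj.mem_iff.2
          (List.mem_cons.2 (Or.inr ((hqcov v).2 (Finset.mem_erase.2 ⟨hvt, hv⟩))))
  · have h1 : ters ((U ++ [t₁]) :: Q₂) = t₁ :: ters Q₂ := by
      simp [ters, List.filterMap_cons, List.getLast?_concat]
    have h2 : ters (U :: Q₂) = τ :: ters Q₂ := by
      simp [ters, List.filterMap_cons, hUl]
    have hperm2 : (ters (Q₁ ++ U :: Q₂')).Perm (τ :: ters Q₂) := h2 ▸ hpq.filterMap List.getLast?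
    have hndQC : (ters (U :: Q₂)).Nodup := ters_nodup (fun l hl => (hqpaths l hl).1) hqnd
    rw [h2] at hndQC
    have hτnotin : τ ∉ ters Q₂ := (List.nodup_cons.1 hndQC).1
    rw [h1]
    ext y
    simp only [List.toFinset_cons, Finset.mem_insert, List.mem_toFinset, Finset.mem_erase]
    constructor
    · rintro (rfl | hy)
      · exact Or.inl rfl
      · exact Or.inr ⟨fun h => hτnotin (h ▸ hy), hperm2.mem_iff.2 (List.mem_cons.2 (Or.inr hy))⟩
    · rintro (rfl | ⟨hyne, hy⟩)
      · exact Or.inl rfl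
      · rcases List.mem_cons.1 (hperm2.mem_iff.1 hy) with rfl | h
        · exact absurd rfl hyne
        · exact Or.inr h

theorem singleton_lemma {R : V → V → Prop} {s : Finset V} {t₁ : V} {Q' : List (List V)}
    [DecidableEq V] (hQ' : PartOn R (s.erase t₁) Q') (ht₁s : t₁ ∈ s) :
    PartOn R s ([t₁] :: Q') ∧ ters ([t₁] :: Q') = t₁ :: ters Q' := by
  obtain ⟨h1, h2, h3⟩ := hQ'
  have ht₁nf : t₁ ∉ Q'.flatten := by
    intro hm
    exact absurd (Finset.mem_erase.1 ((h3 t₁).1 hm)).1 (by simp)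
  have hfl : ([t₁] :: Q').flatten = t₁ :: Q'.flatten := by simp
  refine ⟨⟨?_, ?_, ?_⟩, by simp [ters, List.filterMap_cons]⟩
  · intro l hl
    rcases List.mem_cons.1 hl with rfl | hl
    · exact ⟨by simp, List.isChain_singleton t₁⟩
    · exact h1 l hl
  · rw [hfl]; exact List.nodup_cons.2 ⟨ht₁nf, h2⟩
  · intro v
    rw [hfl]
    constructor
    · intro hv
      rcases List.mem_cons.1 hv with rfl | hv'
      · exact ht₁s
      · exact Finset.mem_of_mem_erase ((h3 v).1 hv')
    · intro hv
      by_cases hvt : v = t₁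
      · simp [hvt]
      · exact List.mem_cons.2 (Or.inr ((h3 v).2 (Finset.mem_erase.2 ⟨hvt, hv⟩)))

end BE2

namespace BE2
variable {V : Type*}

theorem gm_aux [DecidableEq V] (R : V → V → Prop) : ∀ (n : ℕ) (s : Finset V) (P : List (List V)),
    s.card = n → PartOn R s P →
    (∀ Q, PartOn R s Q → ¬ ((ters Q).toFinset ⊂ (ters P).toFinset)) →
    ∃ I : List V, I.Nodup ∧ I.length = P.length ∧
      ∀ u ∈ I, ∀ v ∈ I, u ≠ v → ¬ DAdj R u v := by
  intro n
  induction n using Nat.strong_induction_on with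
  | _ n ih =>
  intro s P hcard hP hmin
  by_cases hst : ∀ u ∈ ters P, ∀ v ∈ ters P, u ≠ v → ¬ DAdj R u v
  · exact ⟨ters P, ters_nodup (fun l hl => (hP.1 l hl).1) hP.2.1,
      ters_length (fun l hl => (hP.1 l hl).1), hst⟩
  push_neg at hst
  obtain ⟨u, hu, v, hv, huv, hadj⟩ := hst
  obtain ⟨t₁, t₂, ht₁, ht₂, hne12, harc⟩ :
      ∃ t₁ t₂, t₁ ∈ ters P ∧ t₂ ∈ ters P ∧ t₁ ≠ t₂ ∧ R t₂ t₁ := by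
    rcases hadj with h | h
    · exact ⟨v, u, hv, hu, huv.symm, h⟩
    · exact ⟨u, v, hu, hv, huv, h⟩
  obtain ⟨W₁, hW₁P, hW₁l⟩ := ters_mem.1 ht₁
  obtain ⟨W₂, hW₂P, hW₂l⟩ := ters_mem.1 ht₂
  have hWne : W₁ ≠ W₂ := by
    rintro rfl
    rw [hW₁l] at hW₂l
    exact hne12 (Option.some_inj.mp hW₂l)
  -- canonical shape P ~ W₁ :: W₂ :: P₂
  obtain ⟨Pa, Pb, rfl⟩ := List.append_of_mem hW₁P
  have hperm1 : (Pa ++ W₁ :: Pb).Perm (W₁ :: (Pa ++ Pb)) := List.perm_middle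
  have hW₂mem : W₂ ∈ Pa ++ Pb := by
    rcases List.mem_append.1 hW₂P with h | h
    · exact List.mem_append.2 (Or.inl h)
    · rcases List.mem_cons.1 h with h' | h'
      · exact absurd h'.symm hWne
      · exact List.mem_append.2 (Or.inr h')
  obtain ⟨Pc, Pd, hcd⟩ := List.append_of_mem hW₂mem
  set P₂ := Pc ++ Pd with hP₂def
  have hperm2 : (Pa ++ Pb).Perm (W₂ :: P₂) := hcd ▸ List.perm_middle
  have hperm : (Pa ++ W₁ :: Pb).Perm (W₁ :: W₂ :: P₂) := hperm1.trans (hperm2.cons W₁)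
  set PC := W₁ :: W₂ :: P₂ with hPCdef
  have hpc : PartOn R s PC := partOn_perm hperm hP
  have hminC : ∀ Q, PartOn R s Q → ¬ ((ters Q).toFinset ⊂ (ters PC).toFinset) := by
    intro Q hQ
    rw [← tersF_perm hperm]
    exact hmin Q hQ
  have hlenC : PC.length = (Pa ++ W₁ :: Pb).length := hperm.length_eq.symm
  obtain ⟨hpaths, hnd, hcov⟩ := hpc
  have hW₁ne : W₁ ≠ [] := (hpaths W₁ (by simp [hPCdef])).1
  have hW₂ne : W₂ ≠ [] := (hpaths W₂ (by simp [hPCdef])).1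
  have htersPC : ters PC = t₁ :: t₂ :: ters P₂ := by
    simp [ters, hPCdef, List.filterMap_cons, hW₁l, hW₂l]
  have hndtersPC : (ters PC).Nodup := ters_nodup (fun l hl => (hpaths l hl).1) hnd
  rw [htersPC] at hndtersPC
  have ht₂nP₂ : t₂ ∉ ters P₂ := (List.nodup_cons.1 (List.nodup_cons.1 hndtersPC).2).1
  have ht₁s : t₁ ∈ s :=
    (hcov t₁).1 (List.mem_flatten.2 ⟨W₁, by simp [hPCdef], mem_of_getLast? hW₁l⟩)
  have hgl : W₁.getLast hW₁ne = t₁ := by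
    have h' := List.getLast?_eq_getLast hW₁ne
    rw [hW₁l] at h'
    exact (Option.some_inj.mp h').symm
  have hFPC : (ters PC).toFinset = insert t₁ (insert t₂ (ters P₂).toFinset) := by
    rw [htersPC]; simp
  -- two cases on whether W₁ is a singleton
  rcases eq_or_ne W₁.dropLast [] with hd | hd
  · -- W₁ = [t₁] : contradiction with minimality
    exfalso
    have hW1eq : W₁ = [t₁] := by
      have h2 := List.dropLast_append_getLast hW₁ne
      rw [hd, hgl] at h2
      simpa using h2.symm
    have hfl : PC.flatten = t₁ :: (W₂ :: P₂).flatten := by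
      simp [hPCdef, hW1eq]
    have hrest : PartOn R (s.erase t₁) (W₂ :: P₂) := by
      rw [hfl] at hnd hcov
      refine ⟨fun l hl => hpaths l (List.mem_cons_of_mem W₁ hl), (List.nodup_cons.1 hnd).2, ?_⟩
      intro w
      constructor
      · intro hw
        refine Finset.mem_erase.2 ⟨?_, (hcov w).1 (List.mem_cons.2 (Or.inr hw))⟩
        rintro rfl
        exact (List.nodup_cons.1 hnd).1 hw
      · intro hw
        obtain ⟨hwne, hws⟩ := Finset.mem_erase.1 hw
        rcases List.mem_cons.1 ((hcov w).2 hws) with rfl | h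
        · exact absurd rfl hwne
        · exact h
    have ht₂ters : t₂ ∈ ters (W₂ :: P₂) := by
      rw [ters, List.filterMap_cons, hW₂l]
      exact List.mem_cons_self
    obtain ⟨Q, hQ, htersQ⟩ := extend_lemma hrest ht₁s ht₂ters harc
    apply hminC Q hQ
    have htersW2 : ters (W₂ :: P₂) = t₂ :: ters P₂ := by
      simp [ters, List.filterMap_cons, hW₂l]
    have herase : (ters (W₂ :: P₂)).toFinset.erase t₂ = (ters P₂).toFinset := by
      rw [htersW2]
      simp only [List.toFinset_cons]
      rw [Finset.erase_insert (by simpa using ht₂nP₂)]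
    rw [htersQ, herase, hFPC]
    have hss : insert t₁ (ters P₂).toFinset ⊆ insert t₁ (insert t₂ (ters P₂).toFinset) := by
      intro y hy
      rcases Finset.mem_insert.1 hy with rfl | hy
      · exact Finset.mem_insert_self _ _
      · exact Finset.mem_insert.2 (Or.inr (Finset.mem_insert.2 (Or.inr hy)))
    refine (Finset.ssubset_iff_of_subset hss).2 ⟨t₂, ?_, ?_⟩
    · exact Finset.mem_insert.2 (Or.inr (Finset.mem_insert_self _ _))
    · intro hmem
      rcases Finset.mem_insert.1 hmem with h | h
      · exact hne12 h.symm
      · exact ht₂nP₂ (List.mem_toFinset.1 h)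
  · -- main case: truncate W₁
    set W₁' := W₁.dropLast with hW₁'def
    have hW₁'ne : W₁' ≠ [] := hd
    have hsplit : W₁' ++ [t₁] = W₁ := by
      rw [hW₁'def, ← hgl]
      exact List.dropLast_append_getLast hW₁ne
    set t₁' := W₁'.getLast hW₁'ne with ht₁'def
    have hW₁'l : W₁'.getLast? = some t₁' := List.getLast?_eq_getLast _
    have harc1 : R t₁' t₁ := by
      have hc : (W₁' ++ [t₁]).Chain' R := by
        rw [hsplit]; exact (hpaths W₁ (by simp [hPCdef])).2
      exact (List.isChain_append.1 hc).2.2 t₁' hW₁'l t₁ rfl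
    set s' := s.erase t₁ with hs'def
    set P' := W₁' :: W₂ :: P₂ with hP'def
    have hjP : PC.flatten.Perm (t₁ :: P'.flatten) := by
      have e1 : (W₁' ++ [t₁]) ++ (W₂ :: P₂).flatten = W₁' ++ (t₁ :: (W₂ :: P₂).flatten) := by
        simp
      have e2 : PC.flatten = (W₁' ++ [t₁]) ++ (W₂ :: P₂).flatten := by
        simp [hPCdef, ← hsplit]
      rw [e2, e1]
      have h3 : (W₁' ++ t₁ :: (W₂ :: P₂).flatten).Perm (t₁ :: (W₁' ++ (W₂ :: P₂).flatten)) :=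
        List.perm_middle
      simpa [hP'def] using h3
    have hndt := hjP.nodup hnd
    have ht₁out : t₁ ∉ P'.flatten := (List.nodup_cons.1 hndt).1
    have hndP' : P'.flatten.Nodup := (List.nodup_cons.1 hndt).2
    have hP'part : PartOn R s' P' := by
      refine ⟨?_, hndP', ?_⟩
      · intro l hl
        rcases List.mem_cons.1 hl with rfl | hl'
        · exact ⟨hW₁'ne, ((hpaths W₁ (by simp [hPCdef])).2).prefix (List.dropLast_prefix W₁)⟩
        · exact hpaths l (List.mem_cons_of_mem W₁ hl')
      · intro w
        constructor
        · intro hw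
          refine Finset.mem_erase.2 ⟨?_, (hcov w).1 (hjP.mem_iff.2 (List.mem_cons.2 (Or.inr hw)))⟩
          rintro rfl
          exact ht₁out hw
        · intro hw
          obtain ⟨hwne, hws⟩ := Finset.mem_erase.1 hw
          rcases List.mem_cons.1 (hjP.mem_iff.1 ((hcov w).2 hws)) with rfl | h
          · exact absurd rfl hwne
          · exact h
    have hcard' : s'.card < n := by
      rw [← hcard]
      exact Finset.card_erase_lt_of_mem ht₁s
    have htersP' : ters P' = t₁' :: t₂ :: ters P₂ := by
      simp [ters, hP'def, List.filterMap_cons, hW₁'l, hW₂l]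
    have hFP' : (ters P').toFinset = insert t₁' (insert t₂ (ters P₂).toFinset) := by
      rw [htersP']; simp
    -- minimality of P' on s'
    have hmin' : ∀ Q', PartOn R s' Q' → ¬ ((ters Q').toFinset ⊂ (ters P').toFinset) := by
      intro Q' hQ' hss
      have hsub := (Finset.ssubset_def.1 hss).1
      obtain ⟨x, hxP', hxQ'⟩ := Finset.exists_of_ssubset hss
      have hxflat : x ∈ P'.flatten := by
        obtain ⟨l, hl, hlx⟩ := ters_mem.1 (List.mem_toFinset.1 hxP')
        exact List.mem_flatten.2 ⟨l, hl, mem_of_getLast? hlx⟩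
      have hxne1 : x ≠ t₁ := fun h => ht₁out (h ▸ hxflat)
      by_cases hA : t₁' ∈ ters Q'
      · obtain ⟨Q, hQ, htersQ⟩ := extend_lemma hQ' ht₁s hA harc1
        apply hminC Q hQ
        rw [htersQ, hFPC]
        have hss2 : insert t₁ ((ters Q').toFinset.erase t₁')
            ⊆ insert t₁ (insert t₂ (ters P₂).toFinset) := by
          intro y hy
          rcases Finset.mem_insert.1 hy with rfl | hy'
          · exact Finset.mem_insert_self _ _
          · obtain ⟨hyne, hyQ⟩ := Finset.mem_erase.1 hy'
            have hyP' := hsub hyQ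
            rw [hFP'] at hyP'
            rcases Finset.mem_insert.1 hyP' with h | h
            · exact absurd h hyne
            · exact Finset.mem_insert.2 (Or.inr h)
        refine (Finset.ssubset_iff_of_subset hss2).2 ⟨x, ?_, ?_⟩
        · have := hxP'
          rw [hFP'] at this
          rcases Finset.mem_insert.1 this with rfl | h
          · exact absurd (List.mem_toFinset.2 hA) hxQ'
          · exact Finset.mem_insert.2 (Or.inr h)
        · intro hmem
          rcases Finset.mem_insert.1 hmem with h | h
          · exact hxne1 h
          · exact hxQ' (Finset.mem_erase.1 h).2
      · by_cases hB : t₂ ∈ ters Q'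
        · obtain ⟨Q, hQ, htersQ⟩ := extend_lemma hQ' ht₁s hB harc
          apply hminC Q hQ
          rw [htersQ, hFPC]
          have hss2 : insert t₁ ((ters Q').toFinset.erase t₂)
              ⊆ insert t₁ (insert t₂ (ters P₂).toFinset) := by
            intro y hy
            rcases Finset.mem_insert.1 hy with rfl | hy'
            · exact Finset.mem_insert_self _ _
            · obtain ⟨hyne, hyQ⟩ := Finset.mem_erase.1 hy'
              have hyP' := hsub hyQ
              rw [hFP'] at hyP'
              rcases Finset.mem_insert.1 hyP' with rfl | h
              · exact absurd (List.mem_toFinset.1 hyQ) hA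
              · rcases Finset.mem_insert.1 h with h' | h'
                · exact absurd h' hyne
                · exact Finset.mem_insert.2 (Or.inr (Finset.mem_insert.2 (Or.inr h')))
          refine (Finset.ssubset_iff_of_subset hss2).2 ⟨t₂, ?_, ?_⟩
          · exact Finset.mem_insert.2 (Or.inr (Finset.mem_insert_self _ _))
          · intro hmem
            rcases Finset.mem_insert.1 hmem with h | h
            · exact hne12 h.symm
            · exact (Finset.mem_erase.1 h).1 rfl
        · obtain ⟨hQ, htersQ⟩ := singleton_lemma hQ' ht₁s
          apply hminC _ hQ
          have hFQ : (ters ([t₁] :: Q')).toFinset = insert t₁ (ters Q').toFinset := by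
            rw [htersQ]; simp
          rw [hFQ, hFPC]
          have hss2 : insert t₁ (ters Q').toFinset
              ⊆ insert t₁ (insert t₂ (ters P₂).toFinset) := by
            intro y hy
            rcases Finset.mem_insert.1 hy with rfl | hy'
            · exact Finset.mem_insert_self _ _
            · have hyP' := hsub hy'
              rw [hFP'] at hyP'
              rcases Finset.mem_insert.1 hyP' with rfl | h
              · exact absurd (List.mem_toFinset.1 hy') hA
              · rcases Finset.mem_insert.1 h with rfl | h'
                · exact absurd (List.mem_toFinset.1 hy') hB
                · exact Finset.mem_insert.2 (Or.inr (Finset.mem_insert.2 (Or.inr h')))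
          refine (Finset.ssubset_iff_of_subset hss2).2 ⟨t₂, ?_, ?_⟩
          · exact Finset.mem_insert.2 (Or.inr (Finset.mem_insert_self _ _))
          · intro hmem
            rcases Finset.mem_insert.1 hmem with h | h
            · exact hne12 h.symm
            · exact hB (List.mem_toFinset.1 h)
    obtain ⟨I, hInd, hIlen, hIst⟩ := ih s'.card hcard' s' P' rfl hP'part hmin'
    refine ⟨I, hInd, ?_, hIst⟩
    rw [hIlen, ← hlenC]
    simp [hP'def, hPCdef]

end BE2

namespace BE2
variable {V : Type*}

theorem flatten_map_singleton (L : List V) : (L.map (fun v => [v])).flatten = L := by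
  induction L with
  | nil => rfl
  | cons a L ih => simp [ih]

theorem gm (R : V → V → Prop) [Fintype V] :
    ∃ P : List (List V), PartOn R Finset.univ P ∧
      ∃ I : List V, I.Nodup ∧ I.length = P.length ∧
        ∀ u ∈ I, ∀ v ∈ I, u ≠ v → ¬ DAdj R u v := by
  classical
  have hex : ∃ P : List (List V), PartOn R Finset.univ P := by
    refine ⟨(Finset.univ : Finset V).toList.map (fun v => [v]), ?_, ?_, ?_⟩
    · intro l hl
      obtain ⟨v, _, rfl⟩ := List.mem_map.1 hl
      exact ⟨by simp, List.isChain_singleton v⟩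
    · rw [flatten_map_singleton]
      exact Finset.nodup_toList _
    · intro v
      rw [flatten_map_singleton]
      simp [Finset.mem_toList]
  set C : Set ℕ := {k | ∃ P : List (List V), PartOn R Finset.univ P ∧
    (ters P).toFinset.card = k} with hC
  have hCne : C.Nonempty := ⟨_, hex.choose, hex.choose_spec, rfl⟩
  obtain ⟨P, hP, hPcard⟩ := Nat.sInf_mem hCne
  refine ⟨P, hP, gm_aux R Finset.univ.card Finset.univ P rfl hP ?_⟩
  intro Q hQ hss
  have hlt : (ters Q).toFinset.card < (ters P).toFinset.card := Finset.card_lt_card hss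
  have hQin : (ters Q).toFinset.card ∈ C := ⟨Q, hQ, rfl⟩
  have := Nat.sInf_le hQin
  omega

theorem head_of_no_in {R : V → V → Prop} : ∀ (l : List V), l.Chain' R → ∀ σ ∈ l,
    (∀ u, ¬ R u σ) → l.head? = some σ
  | [] => by intro _ σ hσ _; simp at hσ
  | x :: xs => by
    intro hch σ hσ hnin
    rcases List.mem_cons.1 hσ with rfl | hσx
    · rfl
    · exfalso
      cases xs with
      | nil => simp at hσx
      | cons y ys =>
        have hxs : (y :: ys).head? = some σ :=
          head_of_no_in (y :: ys) (List.isChain_cons_cons.1 hch).2 σ hσx hnin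
        have hyσ : y = σ := by simpa using hxs
        exact hnin x (hyσ ▸ (List.isChain_cons_cons.1 hch).1)

/-- the pure (all-sources) case -/
theorem pure_out [Finite V] (A : V → V → Prop) (S : Set V) (hmax : IsMaxStable A S)
    (hS : ∀ σ ∈ S, ∀ v, DAdj A σ v → A σ v) :
    ∃ P : List (List V), (∀ l ∈ P, l ≠ [] ∧ l.Chain' A) ∧ P.flatten.Nodup ∧
      (∀ v, v ∈ P.flatten) ∧
      ∀ l ∈ P, ∃ σ, σ ∈ S ∧ l.head? = some σ ∧ ∀ x ∈ l, x ∈ S → x = σ := by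
  classical
  cases nonempty_fintype V
  set A₁ : V → V → Prop := fun u v => A u v ∧ v ∉ S with hA₁
  obtain ⟨P, hP, I, hInd, hIlen, hIst⟩ := gm A₁
  obtain ⟨hpaths, hnd, hcov⟩ := hP
  have hcov' : ∀ v, v ∈ P.flatten := fun v => (hcov v).2 (Finset.mem_univ v)
  have hnoin : ∀ σ ∈ S, ∀ u, ¬ A₁ u σ := fun σ hσ u h => h.2 hσ
  have hheadS : ∀ l ∈ P, ∀ σ ∈ l, σ ∈ S → l.head? = some σ := fun l hl σ hσl hσS =>
    head_of_no_in l (hpaths l hl).2 σ hσl (fun u => hnoin σ hσS u)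
  have hIstA : IsStable A {x | x ∈ I} := by
    intro u hu v hv huv hadj
    have hnadj := hIst u hu v hv huv
    rcases hadj with h | h
    · by_cases hvS : v ∈ S
      · by_cases huS : u ∈ S
        · exact hmax.1 u huS v hvS huv (Or.inl h)
        · exact hnadj (Or.inr ⟨hS v hvS u (Or.inr h), huS⟩)
      · exact hnadj (Or.inl ⟨h, hvS⟩)
    · by_cases huS : u ∈ S
      · by_cases hvS : v ∈ S
        · exact hmax.1 u huS v hvS huv (Or.inr h)
        · exact hnadj (Or.inl ⟨hS u huS v (Or.inr h), hvS⟩)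
      · exact hnadj (Or.inr ⟨h, huS⟩)
  have hIcard : ({x | x ∈ I} : Set V).ncard = I.length := by
    have he : ({x | x ∈ I} : Set V) = ↑I.toFinset := by ext x; simp
    rw [he, Set.ncard_coe_finset, List.toFinset_card_of_nodup hInd]
  have hlen1 : P.length ≤ S.ncard := by
    rw [← hIlen, ← hIcard]
    exact hmax.2 _ hIstA
  set H := heds P with hH
  have hHlen : H.length = P.length := heds_length (fun l hl => (hpaths l hl).1)
  have hHnd : H.Nodup := heds_nodup (fun l hl => (hpaths l hl).1) hnd
  have hSsub : S ⊆ ↑H.toFinset := by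
    intro σ hσ
    obtain ⟨l, hl, hσl⟩ := List.mem_flatten.1 (hcov' σ)
    have hh := hheadS l hl σ hσl hσ
    simp only [Finset.coe_sort_coe, Finset.mem_coe, List.mem_toFinset]
    exact heds_mem.2 ⟨l, hl, hh⟩
  have hcard2 : (↑H.toFinset : Set V).ncard ≤ S.ncard := by
    rw [Set.ncard_coe_finset, List.toFinset_card_of_nodup hHnd, hHlen]
    exact hlen1
  have hSeq : S = ↑H.toFinset := Set.eq_of_subset_of_ncard_le hSsub hcard2 (Set.toFinite _)
  refine ⟨P, fun l hl => ⟨(hpaths l hl).1, ((hpaths l hl).2).imp (fun hab => hab.1 : ∀ {a b : V}, A₁ a b → A a b)⟩,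
    hnd, hcov', ?_⟩
  intro l hl
  have hlne := (hpaths l hl).1
  obtain ⟨h0, hh⟩ : ∃ h0, l.head? = some h0 := ⟨l.head hlne, List.head?_eq_head hlne⟩
  have hh0S : h0 ∈ S := by
    rw [hSeq]
    simp only [Finset.coe_sort_coe, Finset.mem_coe, List.mem_toFinset]
    exact heds_mem.2 ⟨l, hl, hh⟩
  refine ⟨h0, hh0S, hh, ?_⟩
  intro x hx hxS
  have hhx := hheadS l hl x hx hxS
  rw [hh] at hhx
  exact (Option.some_inj.1 hhx).symm

end BE2

namespace BE2
variable {V : Type*}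

theorem flatten_map_perm (P : List (List V)) (f : List V → List V)
    (hf : ∀ l ∈ P, (f l).Perm l) : ((P.map f).flatten).Perm P.flatten := by
  induction P with
  | nil => exact List.Perm.refl _
  | cons a P ih =>
    simp only [List.map_cons, List.flatten_cons]
    exact (hf a (by simp)).append (ih (fun l hl => hf l (by simp [hl])))

/-- re-orientation of a symmetric-closure path in the two-lonely-arc situation -/
theorem reorient {A : V → V → Prop} {S : Set V} {b s s' b' : V} (hsS : s ∈ S) (hs'S : s' ∈ S)
    (hlon : ∀ u v : V, (A u v ∨ A v u) → ¬ A u v → (v = b ∧ u = s) ∨ (v = s' ∧ u = b'))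
    {l : List V} (hch : l.Chain' (fun u v => A u v ∨ A v u)) (hnd : l.Nodup)
    {σ : V} (hhead : l.head? = some σ) (huniq : ∀ x ∈ l, x ∈ S → x = σ)
    (hnc : ¬ l.Chain' A) : l.reverse.Chain' A := by
  have hlne : l ≠ [] := by rintro rfl; simp at hhead
  have hlpos : 0 < l.length := List.length_pos_iff.2 hlne
  have h0 : l.get ⟨0, hlpos⟩ = σ := by
    rw [List.head?_eq_head hlne] at hhead
    have : l.get ⟨0, hlpos⟩ = l.head hlne := by
      cases l with
      | nil => simp at hlne
      | cons a t => rfl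
    rw [this]
    exact Option.some_inj.mp hhead
  have hSidx : ∀ (j : ℕ) (hj : j < l.length), l.get ⟨j, hj⟩ ∈ S → j = 0 := by
    intro j hj hjS
    have hx : l.get ⟨j, hj⟩ = σ := huniq _ (l.get_mem ⟨j, hj⟩) hjS
    have : (⟨j, hj⟩ : Fin l.length) = ⟨0, hlpos⟩ :=
      (List.Nodup.get_inj_iff hnd).1 (by rw [hx, h0])
    simpa using congrArg Fin.val this
  simp only [List.Chain'] at hch hnc ⊢
  rw [List.isChain_iff_getElem] at hch hnc
  push_neg at hnc
  obtain ⟨i, hi, hnA⟩ := hnc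
  have hDi := hch i hi
  have hAi : A (l.get ⟨i + 1, by omega⟩) (l.get ⟨i, by omega⟩) := hDi.resolve_left hnA
  have hcls := hlon (l.get ⟨i, by omega⟩) (l.get ⟨i + 1, by omega⟩) hDi hnA
  rw [List.isChain_reverse, List.isChain_iff_getElem]
  rcases hcls with ⟨hb1, hs1⟩ | ⟨hs'1, hb'1⟩
  · -- l[i] = s, so i = 0
    have hi0 : i = 0 := hSidx i (by omega) (hs1 ▸ hsS)
    subst hi0
    intro j hj
    show A (l.get ⟨j + 1, by omega⟩) (l.get ⟨j, by omega⟩)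
    rcases Nat.eq_zero_or_pos j with rfl | hjpos
    · exact hAi
    · by_contra hnA'
      have hD := hch j hj
      have hcls2 := hlon (l.get ⟨j + 1, by omega⟩) (l.get ⟨j, by omega⟩)
        (hD.symm) hnA'
      rcases hcls2 with ⟨_, hsj⟩ | ⟨hs'j, _⟩
      · exact absurd (hSidx (j + 1) (by omega) (hsj ▸ hsS)) (by omega)
      · exact absurd (hSidx j (by omega) (hs'j ▸ hs'S)) (by omega)
  · exact absurd (hSidx (i + 1) (by omega) (hs'1 ▸ hs'S)) (by omega)

/-- every digraph with at most two lonely arcs has, for each maximum stable set, a partition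
into paths each containing exactly one vertex of S, at an endpoint -/
theorem main_good [Finite V] (A : V → V → Prop) (hirr : ∀ v, ¬ A v v)
    (h2 : {p : V × V | A p.1 p.2 ∧ ¬ A p.2 p.1}.ncard ≤ 2)
    (S : Set V) (hmax : IsMaxStable A S) :
    ∃ P : List (List V), (∀ l ∈ P, l ≠ [] ∧ l.Chain' A) ∧ P.flatten.Nodup ∧
      (∀ v, v ∈ P.flatten) ∧
      ∀ l ∈ P, ∃ σ, σ ∈ S ∧ (l.head? = some σ ∨ l.getLast? = some σ) ∧
        ∀ x ∈ l, x ∈ S → x = σ := by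
  classical
  by_cases hc1 : ∀ σ ∈ S, ∀ v, DAdj A σ v → A σ v
  · obtain ⟨P, h1, h2', h3, h4⟩ := pure_out A S hmax hc1
    exact ⟨P, h1, h2', h3, fun l hl =>
      (h4 l hl).imp (fun σ hσ => ⟨hσ.1, Or.inl hσ.2.1, hσ.2.2⟩)⟩
  by_cases hc2 : ∀ σ ∈ S, ∀ v, DAdj A σ v → A v σ
  · -- all-sinks case via the reversed digraph
    have hmaxF : IsMaxStable (fun u v => A v u) S := by
      constructor
      · intro u hu v hv huv hadj
        exact hmax.1 u hu v hv huv (Or.symm hadj)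
      · intro T hT
        refine hmax.2 T ?_
        intro u hu v hv huv hadj
        exact hT u hu v hv huv (Or.symm hadj)
    have hSF : ∀ σ ∈ S, ∀ v, DAdj (fun u v => A v u) σ v → (fun u v => A v u) σ v := by
      intro σ hσ v hadj
      exact hc2 σ hσ v (Or.symm hadj)
    obtain ⟨P, h1, h2', h3, h4⟩ := pure_out (fun u v => A v u) S hmaxF hSF
    have hpf : ((P.map List.reverse).flatten).Perm P.flatten :=
      flatten_map_perm P List.reverse (fun l _ => l.reverse_perm)
    refine ⟨P.map List.reverse, ?_, hpf.symm.nodup h2', fun v => hpf.mem_iff.2 (h3 v), ?_⟩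
    · intro l hl
      obtain ⟨l', hl', rfl⟩ := List.mem_map.1 hl
      refine ⟨by simp [(h1 l' hl').1], ?_⟩
      exact (List.isChain_reverse (l := l')).2 ((h1 l' hl').2)
    · intro l hl
      obtain ⟨l', hl', rfl⟩ := List.mem_map.1 hl
      obtain ⟨σ, hσS, hσh, hσu⟩ := h4 l' hl'
      refine ⟨σ, hσS, Or.inr (by rw [List.getLast?_reverse]; exact hσh), ?_⟩
      intro x hx hxS
      exact hσu x (List.mem_reverse.1 hx) hxS
  · -- the genuinely mixed case: exactly two lonely arcs, one into S and one out of S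
    push_neg at hc1 hc2
    obtain ⟨s, hsS, b, hadj1, hnsb⟩ := hc1
    obtain ⟨s', hs'S, b', hadj2, hnb's'⟩ := hc2
    have hAbs : A b s := hadj1.resolve_left hnsb
    have hAs'b' : A s' b' := hadj2.resolve_right hnb's'
    have hs'b' : s' ≠ b' := by rintro rfl; exact hirr _ hAs'b'
    have hb'S : b' ∉ S := fun hb => hmax.1 s' hs'S b' hb hs'b' hadj2
    have hne' : ((b, s) : V × V) ≠ (s', b') := by
      intro h
      have hsnd : s = b' := congrArg Prod.snd h
      exact hb'S (hsnd ▸ hsS)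
    have hLeq : {p : V × V | A p.1 p.2 ∧ ¬ A p.2 p.1} = {(b, s), (s', b')} := by
      refine (Set.eq_of_subset_of_ncard_le ?_ ?_ (Set.toFinite _)).symm
      · rintro p hp
        rcases hp with rfl | hp
        · exact ⟨hAbs, hnsb⟩
        · rw [Set.mem_singleton_iff] at hp
          subst hp
          exact ⟨hAs'b', hnb's'⟩
      · rw [Set.ncard_pair hne']
        exact h2
    have hlon : ∀ u v : V, (A u v ∨ A v u) → ¬ A u v → (v = b ∧ u = s) ∨ (v = s' ∧ u = b') := by
      intro u v hadj hna
      have hvu : A v u := hadj.resolve_left hna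
      have hmemL : ((v, u) : V × V) ∈ {p : V × V | A p.1 p.2 ∧ ¬ A p.2 p.1} := ⟨hvu, hna⟩
      rw [hLeq] at hmemL
      rcases hmemL with h | h
      · have h1' : v = b := congrArg Prod.fst h
        have h2' : u = s := congrArg Prod.snd h
        exact Or.inl ⟨h1', h2'⟩
      · simp only [Set.mem_singleton_iff] at h
        have h1' : v = s' := congrArg Prod.fst h
        have h2' : u = b' := congrArg Prod.snd h
        exact Or.inr ⟨h1', h2'⟩
    -- the symmetric closure
    set As : V → V → Prop := fun u v => A u v ∨ A v u with hAsdef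
    have hmaxS : IsMaxStable As S := by
      constructor
      · intro u hu v hv huv hadj
        refine hmax.1 u hu v hv huv ?_
        rcases hadj with h | h
        · exact h
        · exact Or.symm h
      · intro T hT
        refine hmax.2 T ?_
        intro u hu v hv huv hadj
        exact hT u hu v hv huv (Or.inl hadj)
    have hcS : ∀ σ ∈ S, ∀ v, DAdj As σ v → As σ v := by
      intro σ hσ v hadj
      rcases hadj with h | h
      · exact h
      · exact Or.symm h
    obtain ⟨P, h1, h2', h3, h4⟩ := pure_out As S hmaxS hcS
    set f : List V → List V := fun l => if l.Chain' A then l else l.reverse with hfdef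
    have hpf : ((P.map f).flatten).Perm P.flatten :=
      flatten_map_perm P f (fun l _ => by
        by_cases hC : l.Chain' A
        · simp [hfdef, hC]
        · simp only [hfdef, if_neg hC]
          exact l.reverse_perm)
    refine ⟨P.map f, ?_, hpf.symm.nodup h2', fun v => hpf.mem_iff.2 (h3 v), ?_⟩
    · intro l hl
      obtain ⟨l', hl', rfl⟩ := List.mem_map.1 hl
      obtain ⟨σ, hσS, hσh, hσu⟩ := h4 l' hl'
      have hl'nd : l'.Nodup := (List.nodup_flatten.1 h2').1 l' hl'
      by_cases hC : l'.Chain' A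
      · simp only [hfdef, if_pos hC]
        exact ⟨(h1 l' hl').1, hC⟩
      · simp only [hfdef, if_neg hC]
        refine ⟨by simp [(h1 l' hl').1], ?_⟩
        exact reorient hsS hs'S hlon ((h1 l' hl').2) hl'nd hσh hσu hC
    · intro l hl
      obtain ⟨l', hl', rfl⟩ := List.mem_map.1 hl
      obtain ⟨σ, hσS, hσh, hσu⟩ := h4 l' hl'
      by_cases hC : l'.Chain' A
      · simp only [hfdef, if_pos hC]
        exact ⟨σ, hσS, Or.inl hσh, hσu⟩
      · simp only [hfdef, if_neg hC]
        refine ⟨σ, hσS, Or.inr (by rw [List.getLast?_reverse]; exact hσh), ?_⟩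
        intro x hx hxS
        exact hσu x (List.mem_reverse.1 hx) hxS

end BE2

/-- Every digraph with at most two lonely arcs is BE-diperfect (in particular every
symmetric digraph is), and hence α-diperfect. -/
theorem two_semi_symmetric_BEDiperfect {V : Type*} [Finite V] (A : V → V → Prop)
    (hirr : ∀ v, ¬ A v v)
    (h : {p : V × V | A p.1 p.2 ∧ ¬ A p.2 p.1}.ncard ≤ 2) :
    BEDiperfect A ∧ AlphaDiperfect A := by
  have hBE : BEDiperfect A := by
    intro W S hS
    set AW : ↥W → ↥W → Prop := fun a b => A a.1 b.1 with hAW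
    have hirrW : ∀ v : ↥W, ¬ AW v v := fun v => hirr v.1
    have h2W : {p : ↥W × ↥W | AW p.1 p.2 ∧ ¬ AW p.2 p.1}.ncard ≤ 2 := by
      refine le_trans (Set.ncard_le_ncard_of_injOn
        (fun p : ↥W × ↥W => ((p.1.1, p.2.1) : V × V)) ?_ ?_ (Set.toFinite _)) h
      · rintro ⟨a, c⟩ hp
        exact hp
      · rintro ⟨a, c⟩ _ ⟨a', c'⟩ _ hEq
        have h1 : a.1 = a'.1 := congrArg Prod.fst hEq
        have h2' : c.1 = c'.1 := congrArg Prod.snd hEq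
        exact Prod.ext (Subtype.ext h1) (Subtype.ext h2')
    obtain ⟨P, h1, h2', h3, h4⟩ := BE2.main_good AW hirrW h2W S hS
    refine ⟨{l | l ∈ P}, ⟨⟨⟨?_, ?_⟩, ?_⟩, ?_⟩⟩
    · intro l hl
      exact ⟨(h1 l hl).1, (List.nodup_flatten.1 h2').1 l hl, (h1 l hl).2⟩
    · intro v
      obtain ⟨l, hl, hvl⟩ := List.mem_flatten.1 (h3 v)
      refine ⟨l, ⟨hl, hvl⟩, ?_⟩
      rintro l₂ ⟨hl₂, hvl₂⟩
      exact BE2.unique_path h2' hl₂ hl hvl₂ hvl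
    · intro l hl
      obtain ⟨σ, hσS, hpos, huq⟩ := h4 l hl
      have hσl : σ ∈ l := by
        rcases hpos with h | h
        · exact BE2.mem_of_head? h
        · exact BE2.mem_of_getLast? h
      exact ⟨σ, ⟨hσl, hσS⟩, fun x hx => huq x hx.1 hx.2⟩
    · intro l hl x hxl hxS
      obtain ⟨σ, hσS, hpos, huq⟩ := h4 l hl
      have hxσ : x = σ := huq x hxl hxS
      rw [hxσ]
      exact hpos
  refine ⟨hBE, ?_⟩
  intro W S hS
  obtain ⟨P, hP⟩ := hBE W S hS
  exact ⟨P, hP.1⟩
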